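/- Let A_1, …, A_m be Hermitian positive semidefinite d×d complex matrices. Then the mixed characteristic polynomial μ[A_1, …, A_m](x) = (∏_{i=1}^m (1 − ∂_{z_i})) det(xI + ∑_{i=1}^m z_i A_i) |_{z_1 = … = z_m = 0} has all real roots. -/

import Mathlib

open Polynomial Matrix
open scoped ComplexOrder

/-- The multivariate polynomial `det(x I + ∑ i, z i • A i)`, in the variables
`none = x` and `some i = z i`. -/
noncomputable def detPoly {d m : ℕ} (A : Fin m → Matrix (Fin d) (Fin d) ℂ) :
    MvPolynomial (Option (Fin m)) ℂ :=
  ((MvPolynomial.X (none : Option (Fin m)) : MvPolynomial (Option (Fin m)) ℂ) •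
      (1 : Matrix (Fin d) (Fin d) (MvPolynomial (Option (Fin m)) ℂ)) +
    ∑ i : Fin m, (MvPolynomial.X (some i) : MvPolynomial (Option (Fin m)) ℂ) •
      (A i).map MvPolynomial.C).det

/-- The differential operator `∏ i (1 - ∂_{z i})`. -/
noncomputable def mixedOp (m : ℕ) :
    Module.End ℂ (MvPolynomial (Option (Fin m)) ℂ) :=
  (List.ofFn (fun i : Fin m =>
    (1 : Module.End ℂ (MvPolynomial (Option (Fin m)) ℂ)) -
      (MvPolynomial.pderiv (some i)).toLinearMap)).prod

/-- The mixed characteristic polynomial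
`μ[A₁,…,A_m](x) = ∏ i (1 - ∂_{z i}) det(xI + ∑ i z i A i) |_{z=0}`,
obtained by substituting `x ↦ X` and `z i ↦ 0`. -/
noncomputable def mixedCharPoly {d m : ℕ}
    (A : Fin m → Matrix (Fin d) (Fin d) ℂ) : Polynomial ℂ :=
  MvPolynomial.aeval (fun o : Option (Fin m) =>
      match o with
      | none => (Polynomial.X : Polynomial ℂ)
      | some _ => (0 : Polynomial ℂ))
    (mixedOp m (detPoly A))

section Aux
variable {m : ℕ}


lemma prod_eval_key (σ : ℝ) (z₀ : ℂ) (hz : 0 ≤ σ * z₀.im)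
    (M : Multiset ℂ) (hM : ∀ r ∈ M, σ * r.im < 0) :
    eval z₀ (M.map fun r => X - C r).prod ≠ 0 ∧
    eval z₀ (derivative (M.map fun r => X - C r).prod) =
      (M.map fun r => (z₀ - r)⁻¹).sum * eval z₀ (M.map fun r => X - C r).prod ∧
      σ * ((M.map fun r => (z₀ - r)⁻¹).sum).im ≤ 0 ∧
      (M ≠ 0 → σ * ((M.map fun r => (z₀ - r)⁻¹).sum).im < 0) := by
  induction M using Multiset.induction with
  | empty => simp
  | cons r M ih =>
    have hr : σ * r.im < 0 := hM r (Multiset.mem_cons_self r M)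
    obtain ⟨h1, h2, h3, -⟩ := ih (fun s hs => hM s (Multiset.mem_cons_of_mem hs))
    have hzr : z₀ - r ≠ 0 := by
      intro h
      have : z₀ = r := by linear_combination h
      rw [this] at hz; linarith
    have hns : 0 < Complex.normSq (z₀ - r) := Complex.normSq_pos.2 hzr
    have him : σ * ((z₀ - r)⁻¹).im < 0 := by
      rw [Complex.inv_im]
      have h4 : (z₀ - r).im = z₀.im - r.im := by simp
      rw [h4]
      have h5 : σ * (-(z₀.im - r.im) / Complex.normSq (z₀ - r))
          = (σ * r.im - σ * z₀.im) / Complex.normSq (z₀ - r) := by ring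
      rw [h5]
      exact div_neg_of_neg_of_pos (by linarith) hns
    rw [Multiset.map_cons, Multiset.map_cons, Multiset.prod_cons, Multiset.sum_cons]
    refine ⟨by rw [eval_mul]; exact mul_ne_zero (by simpa using hzr) h1, ?_, ?_, ?_⟩
    · rw [derivative_mul, eval_add, eval_mul, eval_mul, h2]
      simp only [derivative_sub, derivative_X, derivative_C, sub_zero, eval_one, eval_sub,
        eval_X, eval_C, eval_mul]
      field_simp
    · rw [Complex.add_im]; nlinarith
    · intro _; rw [Complex.add_im]; nlinarith

lemma key1 (σ : ℝ) (q : Polynomial ℂ)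
    (hq : ∀ z : ℂ, 0 ≤ σ * z.im → q.eval z ≠ 0)
    (z₀ : ℂ) (hz : 0 ≤ σ * z₀.im) :
    (q - derivative q).eval z₀ ≠ 0 := by
  have hq0 : q ≠ 0 := fun h => hq 0 (by simp) (by simp [h])
  have hsplit : Splits q := IsAlgClosed.splits q
  have hfac := hsplit.eq_prod_roots
  have hroots : ∀ r ∈ q.roots, σ * r.im < 0 := by
    intro r hr
    have hre : q.eval r = 0 := (mem_roots hq0).1 hr
    by_contra hcon
    push_neg at hcon
    exact hq r hcon hre
  obtain ⟨h1, h2, h3, h4⟩ := prod_eval_key σ z₀ hz q.roots hroots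
  rcases eq_or_ne q.roots 0 with h0 | h0
  · -- q is a nonzero constant
    have : derivative q = 0 := by
      rw [hfac, h0]; simp
    rw [this, sub_zero]; exact hq z₀ hz
  · have hS := h4 h0
    have hql : q.eval z₀ = q.leadingCoeff * eval z₀ (q.roots.map fun r => X - C r).prod := by
      conv_lhs => rw [hfac]
      simp
    have hq'l : (derivative q).eval z₀ =
        q.leadingCoeff * eval z₀ (derivative (q.roots.map fun r => X - C r).prod) := by
      conv_lhs => rw [hfac]
      rw [derivative_C_mul]
      simp
    rw [eval_sub, sub_ne_zero, hql, hq'l, h2]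
    intro heq
    have hlc : q.leadingCoeff ≠ 0 := leadingCoeff_ne_zero.2 hq0
    have : (q.roots.map fun r => (z₀ - r)⁻¹).sum = 1 := by
      have h6 := mul_left_cancel₀ hlc heq
      have h7 : ((q.roots.map fun r => (z₀ - r)⁻¹).sum - 1) *
          eval z₀ (q.roots.map fun r => X - C r).prod = 0 := by linear_combination -h6
      rcases mul_eq_zero.1 h7 with h8 | h8
      · linear_combination h8
      · exact absurd h8 h1
    rw [this] at hS
    simp at hS




noncomputable def slicePoly (v : Option (Fin m) → ℂ) (i : Fin m) :
    MvPolynomial (Option (Fin m)) ℂ →ₐ[ℂ] Polynomial ℂ :=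
  MvPolynomial.aeval (fun j => if j = some i then (X : Polynomial ℂ) else C (v j))

lemma slicePoly_eval (v : Option (Fin m) → ℂ) (i : Fin m) (t : ℂ)
    (P : MvPolynomial (Option (Fin m)) ℂ) :
    (slicePoly v i P).eval t = MvPolynomial.eval (Function.update v (some i) t) P := by
  have h : (Polynomial.aeval t).comp (slicePoly v i) =
      MvPolynomial.aeval (fun j => (Polynomial.aeval t)
        (if j = some i then (X : Polynomial ℂ) else C (v j))) := by
    exact MvPolynomial.comp_aeval _ _
  have h2 := DFunLike.congr_fun h P
  simp only [AlgHom.coe_comp, Function.comp_apply] at h2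
  have h3 : (fun j => (Polynomial.aeval t)
      (if j = some i then (X : Polynomial ℂ) else C (v j))) = Function.update v (some i) t := by
    funext j
    by_cases hj : j = some i <;> simp [hj, Function.update_apply]
  rw [h3] at h2
  have h4 : Polynomial.aeval t (slicePoly v i P) = (slicePoly v i P).eval t := by
    simp
  have h5 : MvPolynomial.aeval (Function.update v (some i) t) P
      = MvPolynomial.eval (Function.update v (some i) t) P := by
    rw [← MvPolynomial.coe_aeval_eq_eval]; rfl
  rw [← h4, h2, h5]

lemma slicePoly_pderiv (v : Option (Fin m) → ℂ) (i : Fin m)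
    (P : MvPolynomial (Option (Fin m)) ℂ) :
    derivative (slicePoly v i P) = slicePoly v i (MvPolynomial.pderiv (some i) P) := by
  induction P using MvPolynomial.induction_on with
  | C a => simp [slicePoly]
  | add p q hp hq => simp [map_add, hp, hq]
  | mul_X p j hp =>
    rw [_root_.map_mul, derivative_mul, hp, MvPolynomial.pderiv_mul, _root_.map_add, _root_.map_mul,
      MvPolynomial.pderiv_X]
    by_cases hj : j = some i
    · subst hj
      simp [slicePoly, Pi.single_eq_same]
    · have hps : Pi.single (M := fun _ : Option (Fin m) => MvPolynomial (Option (Fin m)) ℂ)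
          (some i) 1 j = 0 := Pi.single_eq_of_ne (fun h => hj h) 1
      rw [hps]
      simp only [mul_zero, map_zero, add_zero]
      have : derivative ((slicePoly v i) (MvPolynomial.X j)) = 0 := by
        simp [slicePoly, hj]
      rw [this, mul_zero, add_zero, mul_comm]

def Stab (σ : ℝ) (P : MvPolynomial (Option (Fin m)) ℂ) : Prop :=
  ∀ v : Option (Fin m) → ℂ, 0 < σ * (v none).im →
    (∀ i : Fin m, 0 ≤ σ * (v (some i)).im) → MvPolynomial.eval v P ≠ 0



lemma stab_step (σ : ℝ) (i : Fin m) (P : MvPolynomial (Option (Fin m)) ℂ)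
    (hP : Stab σ P) : Stab σ (P - MvPolynomial.pderiv (some i) P) := by
  intro v hv0 hvi
  set q := slicePoly v i P with hq
  have hqnv : ∀ z : ℂ, 0 ≤ σ * z.im → q.eval z ≠ 0 := by
    intro z hz
    rw [slicePoly_eval]
    apply hP
    · rwa [Function.update_of_ne (by simp)]
    · intro j
      rcases eq_or_ne j i with rfl | hji
      · rwa [Function.update_self]
      · rw [Function.update_of_ne (by simpa using hji)]
        exact hvi j
  have := key1 σ q hqnv (v (some i)) (hvi i)
  rw [eval_sub, slicePoly_pderiv, slicePoly_eval, slicePoly_eval,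
    Function.update_eq_self] at this
  rwa [map_sub]

lemma stab_list (σ : ℝ) (l : List (Fin m)) (P : MvPolynomial (Option (Fin m)) ℂ)
    (hP : Stab σ P) :
    Stab σ (((l.map (fun i => (1 : Module.End ℂ (MvPolynomial (Option (Fin m)) ℂ)) -
      (MvPolynomial.pderiv (some i)).toLinearMap)).prod :
        Module.End ℂ (MvPolynomial (Option (Fin m)) ℂ)) P) := by
  induction l generalizing P with
  | nil => simpa using hP
  | cons a l ih =>
    rw [List.map_cons, List.prod_cons, Module.End.mul_apply]
    have h2 := stab_step σ a _ (ih P hP)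
    simpa [LinearMap.sub_apply, Module.End.one_apply] using h2

lemma sum_mulVec' {d : ℕ} {ι : Type*} (s : Finset ι) (N : ι → Matrix (Fin d) (Fin d) ℂ)
    (w : Fin d → ℂ) : (∑ i ∈ s, N i) *ᵥ w = ∑ i ∈ s, N i *ᵥ w := by
  induction s using Finset.cons_induction with
  | empty => simp [Matrix.zero_mulVec]
  | cons a s ha ih => rw [Finset.sum_cons, Finset.sum_cons, Matrix.add_mulVec, ih]

lemma dotProduct_sum' {d : ℕ} {ι : Type*} (s : Finset ι) (x : Fin d → ℂ)
    (u : ι → Fin d → ℂ) : x ⬝ᵥ (∑ i ∈ s, u i) = ∑ i ∈ s, x ⬝ᵥ u i := by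
  induction s using Finset.cons_induction with
  | empty => simp
  | cons a s ha ih => rw [Finset.sum_cons, Finset.sum_cons, dotProduct_add, ih]

lemma eval_detPoly {d m : ℕ} (A : Fin m → Matrix (Fin d) (Fin d) ℂ)
    (v : Option (Fin m) → ℂ) :
    MvPolynomial.eval v (detPoly A) =
      ((v none) • (1 : Matrix (Fin d) (Fin d) ℂ) + ∑ i : Fin m, (v (some i)) • A i).det := by
  rw [detPoly, ← MvPolynomial.coe_aeval_eq_eval, RingHom.map_det]
  congr 1
  ext j k
  simp [Matrix.one_apply, Matrix.map_apply, mul_ite, apply_ite, Matrix.sum_apply, map_sum]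

/-- nonvanishing of the determinant for points in the (σ-)halfplanes -/
lemma det_ne_zero {d m : ℕ} (A : Fin m → Matrix (Fin d) (Fin d) ℂ)
    (hA : ∀ i, (A i).PosSemidef) (σ : ℝ) (v : Option (Fin m) → ℂ)
    (hv0 : 0 < σ * (v none).im) (hvi : ∀ i : Fin m, 0 ≤ σ * (v (some i)).im) :
    ((v none) • (1 : Matrix (Fin d) (Fin d) ℂ) + ∑ i : Fin m, (v (some i)) • A i).det ≠ 0 := by
  intro hdet
  obtain ⟨w, hw0, hw⟩ := (Matrix.exists_mulVec_eq_zero_iff).2 hdet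
  set M := (v none) • (1 : Matrix (Fin d) (Fin d) ℂ) + ∑ i : Fin m, (v (some i)) • A i with hM
  have hs : star w ⬝ᵥ M.mulVec w = 0 := by rw [hw, dotProduct_zero]
  have hexp : star w ⬝ᵥ M.mulVec w =
      (v none) * (star w ⬝ᵥ w) + ∑ i : Fin m, (v (some i)) * (star w ⬝ᵥ (A i).mulVec w) := by
    rw [hM, add_mulVec, dotProduct_add, sum_mulVec', dotProduct_sum']
    congr 1
    · rw [smul_mulVec, one_mulVec, dotProduct_smul, smul_eq_mul]
    · refine Finset.sum_congr rfl fun i _ => ?_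
      rw [smul_mulVec, dotProduct_smul, smul_eq_mul]
  -- positivity facts
  have hnw : 0 < star w ⬝ᵥ w := Matrix.dotProduct_star_self_pos_iff.2 hw0
  have hti : ∀ i, 0 ≤ star w ⬝ᵥ (A i).mulVec w := fun i => (hA i).dotProduct_mulVec_nonneg w
  -- take imaginary parts
  have him : (star w ⬝ᵥ M.mulVec w).im =
      (v none).im * (star w ⬝ᵥ w).re + ∑ i, (v (some i)).im * (star w ⬝ᵥ (A i).mulVec w).re := by
    have h0 : (star w ⬝ᵥ w).im = 0 := ((Complex.nonneg_iff.1 hnw.le).2).symm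
    rw [hexp, Complex.add_im, Complex.mul_im, h0, mul_zero, zero_add, Complex.im_sum]
    congr 1
    refine Finset.sum_congr rfl fun i _ => ?_
    have h0i : (star w ⬝ᵥ (A i).mulVec w).im = 0 := ((Complex.nonneg_iff.1 (hti i)).2).symm
    rw [Complex.mul_im, h0i, mul_zero, zero_add]
  have hpos : 0 < σ * (star w ⬝ᵥ M.mulVec w).im := by
    rw [him, mul_add, Finset.mul_sum]
    have h1 : 0 < σ * ((v none).im * (star w ⬝ᵥ w).re) := by
      have := (Complex.pos_iff.1 hnw).1
      nlinarith
    have h2 : ∀ i ∈ Finset.univ, (0:ℝ) ≤ σ * ((v (some i)).im * (star w ⬝ᵥ (A i).mulVec w).re) := by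
      intro i _
      have := (Complex.nonneg_iff.1 (hti i)).1
      nlinarith [hvi i]
    have := Finset.sum_nonneg h2
    linarith
  rw [hs] at hpos
  simp at hpos

end Aux

lemma stab_detPoly {d m : ℕ} (A : Fin m → Matrix (Fin d) (Fin d) ℂ)
    (hA : ∀ i, (A i).PosSemidef) (σ : ℝ) : Stab σ (detPoly A) := by
  intro v hv0 hvi
  rw [eval_detPoly]
  exact det_ne_zero A hA σ v hv0 hvi

lemma stab_mixedOp {d m : ℕ} (A : Fin m → Matrix (Fin d) (Fin d) ℂ)
    (hA : ∀ i, (A i).PosSemidef) (σ : ℝ) : Stab σ (mixedOp m (detPoly A)) := by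
  have h := stab_list σ (List.finRange m) (detPoly A) (stab_detPoly A hA σ)
  rw [← List.ofFn_eq_map] at h
  exact h

lemma eval_mixedCharPoly {d m : ℕ} (A : Fin m → Matrix (Fin d) (Fin d) ℂ) (z : ℂ) :
    (mixedCharPoly A).eval z =
      MvPolynomial.eval (fun o : Option (Fin m) => Option.elim o z (fun _ => 0))
        (mixedOp m (detPoly A)) := by
  set g : Option (Fin m) → Polynomial ℂ := fun o =>
    match o with
    | none => (Polynomial.X : Polynomial ℂ)
    | some _ => (0 : Polynomial ℂ) with hg
  have h : (Polynomial.aeval z).comp (MvPolynomial.aeval g) =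
      MvPolynomial.aeval (fun j => Polynomial.aeval z (g j)) := MvPolynomial.comp_aeval _ _
  have h2 := DFunLike.congr_fun h (mixedOp m (detPoly A))
  simp only [AlgHom.coe_comp, Function.comp_apply] at h2
  have h3 : (fun j => Polynomial.aeval z (g j)) =
      (fun o : Option (Fin m) => Option.elim o z (fun _ => 0)) := by
    funext j
    cases j <;> simp [hg]
  rw [h3] at h2
  have h4 : Polynomial.aeval z (mixedCharPoly A) = (mixedCharPoly A).eval z := by
    simp
  rw [← h4, mixedCharPoly, h2, ← MvPolynomial.coe_aeval_eq_eval]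
  rfl

/-- **Mixed characteristic polynomials are real-rooted.**
If `A₁, …, A_m` are Hermitian positive semidefinite `d × d` complex matrices,
then every (complex) root of `μ[A₁,…,A_m]` is real. -/
theorem mixedCharPoly_real_rooted
    {d m : ℕ} (A : Fin m → Matrix (Fin d) (Fin d) ℂ)
    (hA : ∀ i, (A i).PosSemidef) :
    ∀ z ∈ (mixedCharPoly A).roots, z.im = 0 := by
  intro z hz
  have hroot : (mixedCharPoly A).eval z = 0 := ((mem_roots'.1 hz).2 : _)
  by_contra him
  have key : ∀ σ : ℝ, 0 < σ * z.im → False := by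
    intro σ hσ
    have hstab := stab_mixedOp A hA σ
    have := hstab (fun o : Option (Fin m) => Option.elim o z (fun _ => 0))
      (by simpa using hσ) (by intro i; simp)
    rw [← eval_mixedCharPoly] at this
    exact this hroot
  rcases lt_or_gt_of_ne him with h | h
  · exact key (-1) (by nlinarith)
  · exact key 1 (by nlinarith)
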